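/- Let b > 0, l < r, and for y > max(r, 0) define F(τ, y) = y − (y−l)N(d_−) − (y−r)N(d_+), where d_± = (log((y−r)/(y−l)) ± b²τ/2)/√(b²τ) and N is the standard normal CDF. Then for each fixed τ > 0, lim_{y→∞} F(τ, y) = √(2/π) e^{−b²τ/8} (r−l)/√(b²τ) + l·N(−√(b²τ)/2) + r·N(√(b²τ)/2). -/

import Mathlib

open Set Filter Real MeasureTheory

/-- The standard normal cumulative distribution function. -/
noncomputable def stdNormalCDF (z : ℝ) : ℝ :=
  (∫ t in Iic z, Real.exp (-(t^2) / 2)) / Real.sqrt (2 * Real.pi)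

open Topology

lemma gauss_integrable : Integrable (fun t : ℝ => Real.exp (-(t^2) / 2)) := by
  have := integrable_exp_neg_mul_sq (by norm_num : (0:ℝ) < 1/2)
  convert this using 2 with t
  ring_nf

lemma gauss_total : ∫ t : ℝ, Real.exp (-(t^2) / 2) = Real.sqrt (2 * Real.pi) := by
  have := integral_gaussian (1/2)
  rw [show π / (1/2 : ℝ) = 2 * π by ring] at this
  rw [← this]
  congr 1 with t
  ring_nf

lemma stdNormalCDF_hasDerivAt (z : ℝ) :
    HasDerivAt stdNormalCDF (Real.exp (-(z^2)/2) / Real.sqrt (2 * Real.pi)) z := by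
  have hcont : Continuous fun t : ℝ => Real.exp (-(t^2)/2) := by continuity
  have key : ∀ x : ℝ, stdNormalCDF x =
      ((∫ t in Iic (0:ℝ), Real.exp (-(t^2)/2)) + ∫ t in (0:ℝ)..x, Real.exp (-(t^2)/2))
        / Real.sqrt (2 * Real.pi) := by
    intro x
    rw [← intervalIntegral.integral_Iic_sub_Iic (gauss_integrable.integrableOn)
      (gauss_integrable.integrableOn) (a := 0) (b := x)]
    simp [stdNormalCDF]
  have h1 : HasDerivAt (fun x => ∫ t in (0:ℝ)..x, Real.exp (-(t^2)/2))
      (Real.exp (-(z^2)/2)) z :=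
    intervalIntegral.integral_hasDerivAt_right
      (hcont.intervalIntegrable _ _)
      (hcont.stronglyMeasurable.stronglyMeasurableAtFilter)
      hcont.continuousAt
  have h2 := (h1.const_add (∫ t in Iic (0:ℝ), Real.exp (-(t^2)/2))).div_const
    (Real.sqrt (2 * Real.pi))
  exact h2.congr_of_eventuallyEq (by filter_upwards with x; rw [key x])

lemma stdNormalCDF_add_neg (x : ℝ) : stdNormalCDF x + stdNormalCDF (-x) = 1 := by
  have h1 : ∫ t in Iic (-x), Real.exp (-(t^2) / 2) = ∫ t in Ioi x, Real.exp (-(t^2) / 2) := by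
    calc ∫ t in Iic (-x), Real.exp (-(t^2) / 2)
        = ∫ t in Iic (-x), Real.exp (-((-t)^2) / 2) := by congr 1 with t; ring_nf
      _ = ∫ t in Ioi (-(-x)), Real.exp (-(t^2) / 2) :=
          integral_comp_neg_Iic (-x) (fun t => Real.exp (-(t^2) / 2))
      _ = ∫ t in Ioi x, Real.exp (-(t^2) / 2) := by rw [neg_neg]
  have h2 : (∫ t in Iic x, Real.exp (-(t^2) / 2)) + ∫ t in Ioi x, Real.exp (-(t^2) / 2)
      = Real.sqrt (2 * Real.pi) := by
    rw [intervalIntegral.integral_Iic_add_Ioi gauss_integrable.integrableOn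
      gauss_integrable.integrableOn, gauss_total]
  have hpos : (0:ℝ) < Real.sqrt (2 * Real.pi) := Real.sqrt_pos.2 (by positivity)
  rw [stdNormalCDF, stdNormalCDF, ← add_div, h1, h2, div_self hpos.ne']

/-- Quadratic normal volatility model: for `b > 0`, `l < r`, and
`F(τ,y) = y - (y-l) N(d₋) - (y-r) N(d₊)`,
`d± = (log((y-r)/(y-l)) ± b²τ/2)/√(b²τ)`, one has, for each fixed `τ > 0`,
`lim_{y→∞} F(τ,y) = √(2/π) e^(-b²τ/8)(r-l)/√(b²τ) + l N(-√(b²τ)/2) + r N(√(b²τ)/2)`. -/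
theorem qnv_forward_limit_at_infinity
    (b l r τ : ℝ) (hb : 0 < b) (hlr : l < r) (hτ : 0 < τ) :
    Tendsto
      (fun y : ℝ => y
        - (y - l) * stdNormalCDF ((Real.log ((y - r)/(y - l)) - b^2*τ/2) / Real.sqrt (b^2*τ))
        - (y - r) * stdNormalCDF ((Real.log ((y - r)/(y - l)) + b^2*τ/2) / Real.sqrt (b^2*τ)))
      atTop
      (nhds (Real.sqrt (2/Real.pi) * Real.exp (-b^2*τ/8) * (r - l) / Real.sqrt (b^2*τ)
        + l * stdNormalCDF (-Real.sqrt (b^2*τ)/2)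
        + r * stdNormalCDF (Real.sqrt (b^2*τ)/2))) := by
  have hbτ : 0 < b^2*τ := by positivity
  set s : ℝ := Real.sqrt (b^2*τ) with hs_def
  have hs : 0 < s := Real.sqrt_pos.2 hbτ
  have hs2 : s^2 = b^2*τ := Real.sq_sqrt hbτ.le
  set u : ℝ → ℝ := fun y => Real.log ((y - r)/(y - l)) with hu_def
  set g : ℝ → ℝ := fun v =>
    stdNormalCDF ((-v - s^2/2)/s) - stdNormalCDF ((v - s^2/2)/s) with hg_def
  set φ : ℝ := Real.exp (-((-s/2)^2)/2) / Real.sqrt (2 * Real.pi) with hφ_def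
  set D : ℝ := φ * (-1/s) - φ * (1/s) with hD_def
  -- useful value equalities
  have hval2 : (-(0:ℝ) - s^2/2)/s = -s/2 := by rw [div_eq_iff hs.ne']; ring
  have hval3 : ((0:ℝ) - s^2/2)/s = -s/2 := by rw [div_eq_iff hs.ne']; ring
  -- key algebraic identity
  have hkey : ∀ y : ℝ,
      y - (y - l) * stdNormalCDF ((Real.log ((y - r)/(y - l)) - b^2*τ/2) / s)
        - (y - r) * stdNormalCDF ((Real.log ((y - r)/(y - l)) + b^2*τ/2) / s)
      = r + y * g (u y) + l * stdNormalCDF ((u y - s^2/2)/s)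
          - r * stdNormalCDF ((-u y - s^2/2)/s) := by
    intro y
    have e1 : (Real.log ((y - r)/(y - l)) - b^2*τ/2) / s = (u y - s^2/2)/s := by
      rw [hs2, hu_def]
    have e2 : (Real.log ((y - r)/(y - l)) + b^2*τ/2) / s = (u y + s^2/2)/s := by
      rw [hs2, hu_def]
    have e3 : -((u y + s^2/2)/s) = (-u y - s^2/2)/s := by ring
    have hc : stdNormalCDF ((u y + s^2/2)/s) = 1 - stdNormalCDF ((-u y - s^2/2)/s) := by
      have := stdNormalCDF_add_neg ((u y + s^2/2)/s)
      rw [e3] at this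
      linarith
    rw [e1, e2, hc, hg_def]
    ring
  -- limit of u
  have hu0 : Tendsto u atTop (𝓝 0) := by
    have hratio : Tendsto (fun y : ℝ => (y - r)/(y - l)) atTop (𝓝 1) := by
      have h1 : Tendsto (fun y : ℝ => 1 + (l - r)/(y - l)) atTop (𝓝 1) := by
        have h2 : Tendsto (fun y : ℝ => y - l) atTop atTop := by
          simpa [sub_eq_add_neg] using tendsto_atTop_add_const_right atTop (-l) tendsto_id
        have h3 : Tendsto (fun y : ℝ => (l - r)/(y - l)) atTop (𝓝 0) :=
          tendsto_const_nhds.div_atTop h2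
        simpa using tendsto_const_nhds.add h3
      refine h1.congr' ?_
      filter_upwards [eventually_gt_atTop (max l r)] with y hy
      have hyl : (0:ℝ) < y - l := by
        have := (le_max_left l r).trans_lt hy; linarith
      field_simp
      ring
    have := ((Real.continuousAt_log one_ne_zero).tendsto).comp hratio
    simpa [Real.log_one, hu_def, Function.comp_def] using this
  have huneg : ∀ᶠ y in atTop, u y < 0 := by
    filter_upwards [eventually_gt_atTop (max l r)] with y hy
    have hyl : (0:ℝ) < y - l := by
      have := (le_max_left l r).trans_lt hy; linarith
    have hyr : (0:ℝ) < y - r := by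
      have := (le_max_right l r).trans_lt hy; linarith
    have hlt : (y - r)/(y - l) < 1 := by
      rw [div_lt_one hyl]; linarith
    exact Real.log_neg (by positivity) hlt
  have hu_ne : Tendsto u atTop (𝓝[≠] 0) := by
    rw [tendsto_nhdsWithin_iff]
    exact ⟨hu0, huneg.mono fun y hy => ne_of_lt hy⟩
  -- derivative of g at 0
  have hinner1 : HasDerivAt (fun v : ℝ => (-v - s^2/2)/s) (-1/s) 0 :=
    ((hasDerivAt_id (0:ℝ)).neg.sub_const (s^2/2)).div_const s
  have hinner2 : HasDerivAt (fun v : ℝ => (v - s^2/2)/s) (1/s) 0 :=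
    ((hasDerivAt_id (0:ℝ)).sub_const (s^2/2)).div_const s
  have houter : HasDerivAt stdNormalCDF φ ((-(0:ℝ) - s^2/2)/s) := by
    rw [hval2, hφ_def]; exact stdNormalCDF_hasDerivAt (-s/2)
  have houter' : HasDerivAt stdNormalCDF φ (((0:ℝ) - s^2/2)/s) := by
    rw [hval3, hφ_def]; exact stdNormalCDF_hasDerivAt (-s/2)
  have hA : HasDerivAt (fun v : ℝ => stdNormalCDF ((-v - s^2/2)/s)) (φ * (-1/s)) 0 :=
    by have := houter.comp 0 hinner1; exact this
  have hB : HasDerivAt (fun v : ℝ => stdNormalCDF ((v - s^2/2)/s)) (φ * (1/s)) 0 :=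
    by have := houter'.comp 0 hinner2; exact this
  have hgderiv : HasDerivAt g D 0 := hA.sub hB
  have hg0 : g 0 = 0 := by
    have : g 0 = stdNormalCDF ((-(0:ℝ) - s^2/2)/s) - stdNormalCDF (((0:ℝ) - s^2/2)/s) := rfl
    rw [this, hval2, hval3, sub_self]
  -- slope limit
  have hquot : Tendsto (fun y => g (u y) / u y) atTop (𝓝 D) := by
    have hslope := hasDerivAt_iff_tendsto_slope.1 hgderiv
    have := hslope.comp hu_ne
    refine this.congr fun y => ?_
    simp [slope_fun_def, hg0, div_eq_inv_mul]
  -- y * u y → l - r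
  have hyu : Tendsto (fun y => y * u y) atTop (𝓝 (l - r)) := by
    have h0 := Real.tendsto_mul_log_one_add_div_atTop (l - r)
    have hshift : Tendsto (fun y : ℝ => y - l) atTop atTop := by
      simpa [sub_eq_add_neg] using tendsto_atTop_add_const_right atTop (-l) tendsto_id
    have h1 : Tendsto (fun y : ℝ => (y - l) * Real.log (1 + (l - r)/(y - l))) atTop
        (𝓝 (l - r)) := h0.comp hshift
    have h2 : Tendsto (fun y => (y - l) * u y) atTop (𝓝 (l - r)) := by
      refine h1.congr' ?_
      filter_upwards [eventually_gt_atTop (max l r)] with y hy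
      have hyl : (0:ℝ) < y - l := by
        have := (le_max_left l r).trans_lt hy; linarith
      have : 1 + (l - r)/(y - l) = (y - r)/(y - l) := by field_simp; ring
      rw [this]
    have h3 : Tendsto (fun y => (y - l) * u y + l * u y) atTop (𝓝 (l - r + l * 0)) :=
      h2.add (hu0.const_mul l)
    have h4 : Tendsto (fun y => y * u y) atTop (𝓝 (l - r + l * 0)) :=
      h3.congr fun y => by ring
    simpa using h4
  -- product limit
  have hprod : Tendsto (fun y => y * g (u y)) atTop (𝓝 (D * (l - r))) := by
    refine (hquot.mul hyu).congr' ?_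
    filter_upwards [huneg] with y hy
    have h0 : u y ≠ 0 := ne_of_lt hy
    field_simp
  -- continuity terms
  have harg1 : Tendsto (fun y => (u y - s^2/2)/s) atTop (𝓝 (-s/2)) := by
    have := (hu0.sub_const (s^2/2)).div_const s
    rwa [hval3] at this
  have harg2 : Tendsto (fun y => (-u y - s^2/2)/s) atTop (𝓝 (-s/2)) := by
    have := (hu0.neg.sub_const (s^2/2)).div_const s
    rwa [hval2] at this
  have hNl : Tendsto (fun y => l * stdNormalCDF ((u y - s^2/2)/s)) atTop
      (𝓝 (l * stdNormalCDF (-s/2))) :=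
    (((stdNormalCDF_hasDerivAt _).continuousAt.tendsto).comp harg1).const_mul l
  have hNr : Tendsto (fun y => r * stdNormalCDF ((-u y - s^2/2)/s)) atTop
      (𝓝 (r * stdNormalCDF (-s/2))) :=
    (((stdNormalCDF_hasDerivAt _).continuousAt.tendsto).comp harg2).const_mul r
  have main : Tendsto (fun y => r + y * g (u y) + l * stdNormalCDF ((u y - s^2/2)/s)
      - r * stdNormalCDF ((-u y - s^2/2)/s)) atTop
      (𝓝 (r + D * (l - r) + l * stdNormalCDF (-s/2) - r * stdNormalCDF (-s/2))) :=
    ((tendsto_const_nhds.add hprod).add hNl).sub hNr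
  -- constant identity
  have hsym : stdNormalCDF (s/2) = 1 - stdNormalCDF (-s/2) := by
    have h := stdNormalCDF_add_neg (s/2)
    rw [show -(s/2) = -s/2 by ring] at h
    linarith
  have hPne : Real.sqrt (2 * Real.pi) ≠ 0 := by positivity
  have hnum : Real.sqrt (2/Real.pi) = 2 / Real.sqrt (2 * Real.pi) := by
    rw [eq_div_iff hPne, ← Real.sqrt_mul (by positivity : (0:ℝ) ≤ 2/π)]
    rw [show (2/π) * (2*π) = 4 by field_simp; ring]
    rw [show (4:ℝ) = 2^2 by norm_num, Real.sqrt_sq (by norm_num : (0:ℝ) ≤ 2)]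
  have hexp : Real.exp (-((-s/2)^2)/2) = Real.exp (-b^2*τ/8) := by
    congr 1
    linear_combination (-(1:ℝ)/8) * hs2
  have hconst : r + D * (l - r) + l * stdNormalCDF (-s/2) - r * stdNormalCDF (-s/2)
      = Real.sqrt (2/Real.pi) * Real.exp (-b^2*τ/8) * (r - l) / s
        + l * stdNormalCDF (-s/2) + r * stdNormalCDF (s/2) := by
    rw [hsym, hD_def, hφ_def, hexp, hnum]
    field_simp
    ring
  rw [← hconst]
  exact main.congr fun y => (hkey y).symm
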